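/- Fix natural numbers d ≥ 0 and k ≥ 1. For integers n with n ≥ max(k, d), define λ^{(k)}(n) = [ n!·(n+1)! / ((n−k)!·(n+k+1)!) ] · ( Σ_{z=0}^{d} (−1)^z · C(n−k, z) · C(k, d−z)² / C(n,d) )². Then lim_{n→∞} n·(1 − λ^{(k)}(n)) = k(k+1)(2d+1); equivalently, with ℏ = 1/n, λ^{(k)}(n) = 1 − k(k+1)(2d+1)·ℏ + O(ℏ²) as n → ∞. -/

import Mathlib

open scoped BigOperators
open Filter Topology Finset


namespace LamAux

lemma tendsto_inv_nat : Filter.Tendsto (fun n : ℕ => ((n:ℝ))⁻¹) atTop (nhds 0) :=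
  tendsto_natCast_atTop_atTop.inv_tendsto_atTop

/-- (n - c)/n → 1 -/
lemma tendsto_sub_div (c : ℝ) :
    Tendsto (fun n : ℕ => ((n:ℝ) - c)/(n:ℝ)) atTop (nhds 1) := by
  have h : Tendsto (fun n : ℕ => 1 - c * ((n:ℝ))⁻¹) atTop (nhds (1 - c * 0)) :=
    tendsto_const_nhds.sub (tendsto_const_nhds.mul tendsto_inv_nat)
  rw [mul_zero, sub_zero] at h
  apply h.congr'
  filter_upwards [eventually_ge_atTop 1] with n hn
  have hn' : (n:ℝ) ≠ 0 := by positivity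
  field_simp

/-- n/(n - c) → 1 -/
lemma tendsto_div_sub (c : ℝ) :
    Tendsto (fun n : ℕ => (n:ℝ)/((n:ℝ) - c)) atTop (nhds 1) := by
  have h := (tendsto_sub_div c).inv₀ one_ne_zero
  rw [inv_one] at h
  apply h.congr
  intro n; rw [inv_div]

/-- n * (a/(n-c)) → a -/
lemma tendsto_n_mul_div (a c : ℝ) :
    Tendsto (fun n : ℕ => (n:ℝ) * (a/((n:ℝ) - c))) atTop (nhds a) := by
  have h := (tendsto_div_sub c).const_mul a
  rw [mul_one] at h
  apply h.congr
  intro n; ring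

/-- if n * g n converges then g → 0 -/
lemma tendsto_zero_of_n_mul (g : ℕ → ℝ) (L : ℝ)
    (h : Tendsto (fun n : ℕ => (n:ℝ) * g n) atTop (nhds L)) :
    Tendsto g atTop (nhds 0) := by
  have h2 : Tendsto (fun n : ℕ => ((n:ℝ) * g n) * ((n:ℝ))⁻¹) atTop (nhds (L * 0)) :=
    h.mul tendsto_inv_nat
  rw [mul_zero] at h2
  apply h2.congr'
  filter_upwards [eventually_ge_atTop 1] with n hn
  have hn' : (n:ℝ) ≠ 0 := by positivity
  field_simp

/-- if n*(1 - f n) converges then f → 1 -/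
lemma tendsto_one_of_n_mul (f : ℕ → ℝ) (c : ℝ)
    (h : Tendsto (fun n : ℕ => (n:ℝ) * (1 - f n)) atTop (nhds c)) :
    Tendsto f atTop (nhds 1) := by
  have := tendsto_zero_of_n_mul _ _ h
  have h2 : Tendsto (fun n => 1 - (1 - f n)) atTop (nhds (1 - 0)) :=
    tendsto_const_nhds.sub this
  rw [sub_zero] at h2
  apply h2.congr; intro n; ring

/-- key product lemma -/
lemma prod_n_mul_one_sub {ι : Type*} (s : Finset ι) (f : ι → ℕ → ℝ) (c : ι → ℝ)
    (h : ∀ i ∈ s, Tendsto (fun n : ℕ => (n:ℝ) * (1 - f i n)) atTop (nhds (c i))) :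
    Tendsto (fun n : ℕ => (n:ℝ) * (1 - ∏ i ∈ s, f i n)) atTop (nhds (∑ i ∈ s, c i)) := by
  induction s using Finset.cons_induction with
  | empty => simpa using (tendsto_const_nhds : Tendsto (fun _ : ℕ => (0:ℝ)) atTop (nhds 0))
  | cons a s ha ih =>
    have hfa := h a (Finset.mem_cons_self a s)
    have hrest := ih (fun i hi => h i (Finset.mem_cons_of_mem hi))
    have hP : Tendsto (fun n => ∏ i ∈ s, f i n) atTop (nhds 1) := by
      have : Tendsto (fun n => ∏ i ∈ s, f i n) atTop (nhds (∏ i ∈ s, (1:ℝ))) :=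
        tendsto_finset_prod _ (fun i hi => tendsto_one_of_n_mul _ _ (h i (Finset.mem_cons_of_mem hi)))
      simpa using this
    have key : Tendsto (fun n : ℕ => (n:ℝ) * (1 - f a n) * (∏ i ∈ s, f i n)
        + (n:ℝ) * (1 - ∏ i ∈ s, f i n)) atTop (nhds (c a * 1 + ∑ i ∈ s, c i)) :=
      (hfa.mul hP).add hrest
    rw [mul_one] at key
    rw [Finset.sum_cons]
    apply key.congr; intro n
    rw [Finset.prod_cons]; ring

end LamAux


namespace LamAux2

/-- Φ a z n = ∏_{i<z} (n - a - i) as a real number. -/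
noncomputable def Phi (a z : ℕ) (n : ℕ) : ℝ := ∏ i ∈ Finset.range z, ((n:ℝ) - a - i)

lemma Phi_pos {a z n : ℕ} (h : a + z ≤ n) : 0 < Phi a z n := by
  apply Finset.prod_pos
  intro i hi
  rw [Finset.mem_range] at hi
  have : (a:ℝ) + i < n := by
    have : a + i < n := by omega
    exact_mod_cast this
  linarith

lemma tendsto_Phi_div_pow (a z : ℕ) :
    Tendsto (fun n : ℕ => Phi a z n / (n:ℝ)^z) atTop (nhds 1) := by
  have h : Tendsto (fun n : ℕ => ∏ i ∈ Finset.range z, ((n:ℝ) - ((a:ℝ)+i))/(n:ℝ))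
      atTop (nhds (∏ i ∈ Finset.range z, (1:ℝ))) :=
    tendsto_finset_prod _ (fun i _ => LamAux.tendsto_sub_div _)
  rw [Finset.prod_const_one] at h
  apply h.congr'
  filter_upwards [eventually_ge_atTop 1] with n hn
  have hn' : (n:ℝ) ≠ 0 := by positivity
  rw [Finset.prod_div_distrib, Finset.prod_const, Finset.card_range]
  unfold Phi
  congr 1
  apply Finset.prod_congr rfl
  intro i _; ring

lemma tendsto_pow_div_Phi (a z : ℕ) :
    Tendsto (fun n : ℕ => (n:ℝ)^z / Phi a z n) atTop (nhds 1) := by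
  have h := (tendsto_Phi_div_pow a z).inv₀ one_ne_zero
  rw [inv_one] at h
  apply h.congr
  intro n; rw [inv_div]

lemma tendsto_Phi_ratio (a d : ℕ) :
    Tendsto (fun n : ℕ => Phi a d n / Phi 0 d n) atTop (nhds 1) := by
  have h := (tendsto_Phi_div_pow a d).mul (tendsto_pow_div_Phi 0 d)
  rw [mul_one] at h
  apply h.congr'
  filter_upwards [eventually_ge_atTop (a + d + 1)] with n hn
  have h1 : Phi a d n ≠ 0 := ne_of_gt (Phi_pos (by omega))
  have h2 : Phi 0 d n ≠ 0 := ne_of_gt (Phi_pos (by omega))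
  have hn' : (n:ℝ) ≠ 0 := by
    have : 1 ≤ n := by omega
    positivity
  field_simp

lemma tendsto_n_mul_Phi_ratio_eq (a z d : ℕ) (h : z + 1 = d) :
    Tendsto (fun n : ℕ => (n:ℝ) * (Phi a z n / Phi 0 d n)) atTop (nhds 1) := by
  have h3 := (tendsto_Phi_div_pow a z).mul (tendsto_pow_div_Phi 0 d)
  rw [mul_one] at h3
  apply h3.congr'
  filter_upwards [eventually_ge_atTop (a + z + d + 1)] with n hn
  have h1 : Phi a z n ≠ 0 := ne_of_gt (Phi_pos (by omega))
  have h2 : Phi 0 d n ≠ 0 := ne_of_gt (Phi_pos (by omega))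
  have hn' : (n:ℝ) ≠ 0 := by
    have : 1 ≤ n := by omega
    positivity
  subst h
  field_simp
  ring

lemma tendsto_n_mul_Phi_ratio_lt (a z d : ℕ) (h : z + 1 < d) :
    Tendsto (fun n : ℕ => (n:ℝ) * (Phi a z n / Phi 0 d n)) atTop (nhds 0) := by
  have hpow : Tendsto (fun n : ℕ => ((n:ℝ)^(d - (z+1)))⁻¹) atTop (nhds 0) := by
    apply Filter.Tendsto.inv_tendsto_atTop
    exact (tendsto_pow_atTop (by omega)).comp tendsto_natCast_atTop_atTop
  have h3 := ((tendsto_Phi_div_pow a z).mul (tendsto_pow_div_Phi 0 d)).mul hpow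
  rw [mul_one, one_mul] at h3
  apply h3.congr'
  filter_upwards [eventually_ge_atTop (a + z + d + 1)] with n hn
  have h1 : Phi a z n ≠ 0 := ne_of_gt (Phi_pos (by omega))
  have h2 : Phi 0 d n ≠ 0 := ne_of_gt (Phi_pos (by omega))
  have hn' : (n:ℝ) ≠ 0 := by
    have : 1 ≤ n := by omega
    positivity
  have hsplit : (n:ℝ)^d = (n:ℝ)^z * (n:ℝ) * (n:ℝ)^(d-(z+1)) := by
    rw [← pow_succ, ← pow_add]
    congr 1; omega
  rw [hsplit]
  field_simp

/-- the plain ratio tends to 0 when z < d -/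
lemma tendsto_Phi_ratio_lt (a z d : ℕ) (h : z < d) :
    Tendsto (fun n : ℕ => Phi a z n / Phi 0 d n) atTop (nhds 0) := by
  rcases Nat.lt_or_ge (z+1) d with h'|h'
  · exact LamAux.tendsto_zero_of_n_mul _ _ (tendsto_n_mul_Phi_ratio_lt a z d h')
  · have : z + 1 = d := by omega
    exact LamAux.tendsto_zero_of_n_mul _ _ (tendsto_n_mul_Phi_ratio_eq a z d this)

/-- n(1 - Φ_{k,d}/Φ_{0,d}) → d·k -/
lemma tendsto_n_mul_one_sub_Phi_ratio (k d : ℕ) :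
    Tendsto (fun n : ℕ => (n:ℝ) * (1 - Phi k d n / Phi 0 d n)) atTop (nhds ((d:ℝ) * k)) := by
  have key := LamAux.prod_n_mul_one_sub (Finset.range d)
    (fun i n => ((n:ℝ) - k - i)/((n:ℝ) - i)) (fun _ => (k:ℝ))
    (fun i hi => by
      have h1 : Tendsto (fun n : ℕ => (n:ℝ) * ((k:ℝ)/((n:ℝ) - i))) atTop (nhds k) :=
        LamAux.tendsto_n_mul_div _ _
      apply h1.congr'
      filter_upwards [eventually_ge_atTop (i + 1)] with n hn
      have hni : (n:ℝ) - i ≠ 0 := by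
        have : (i:ℝ) < n := by exact_mod_cast Nat.lt_of_lt_of_le (Nat.lt_succ_self i) hn
        linarith
      field_simp
      ring)
  rw [Finset.sum_const, Finset.card_range, nsmul_eq_mul] at key
  apply key.congr
  intro n
  congr 2
  unfold Phi
  rw [Finset.prod_div_distrib]
  simp

end LamAux2


namespace LamAux3
open LamAux2

lemma cast_descFactorial_sub (a z n : ℕ) (h : a + z ≤ n) :
    (((n - a).descFactorial z : ℕ) : ℝ) = Phi a z n := by
  rw [Nat.descFactorial_eq_prod_range, Nat.cast_prod]
  apply Finset.prod_congr rfl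
  intro i hi
  rw [Finset.mem_range] at hi
  rw [Nat.cast_sub (by omega), Nat.cast_sub (by omega)]

lemma cast_choose_sub (a z n : ℕ) (h : a + z ≤ n) :
    (((n - a).choose z : ℕ) : ℝ) = Phi a z n / (z.factorial : ℝ) := by
  have h1 : ((n - a).descFactorial z : ℕ) = z.factorial * (n - a).choose z :=
    Nat.descFactorial_eq_factorial_mul_choose _ _
  have h2 := cast_descFactorial_sub a z n h
  rw [h1] at h2
  push_cast at h2
  have hz : (z.factorial : ℝ) ≠ 0 := by positivity
  field_simp
  linarith [h2]

lemma cast_choose (d n : ℕ) (h : d ≤ n) :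
    ((n.choose d : ℕ) : ℝ) = Phi 0 d n / (d.factorial : ℝ) := by
  have := cast_choose_sub 0 d n (by omega)
  simpa using this

lemma cast_prefactor (k n : ℕ) (h : k ≤ n) :
    ((n.factorial : ℝ) * ((n + 1).factorial : ℝ)) /
      (((n - k).factorial : ℝ) * ((n + k + 1).factorial : ℝ))
    = ∏ i ∈ Finset.range k, ((n:ℝ) - i)/((n:ℝ) + (k:ℝ) + 1 - i) := by
  have h1 : ((n - k).factorial : ℝ) * ((n.descFactorial k : ℕ) : ℝ) = (n.factorial : ℝ) := by
    exact_mod_cast congrArg (Nat.cast : ℕ → ℝ) (Nat.factorial_mul_descFactorial h)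
  have h2 : ((n + 1).factorial : ℝ) * (((n+k+1).descFactorial k : ℕ) : ℝ)
      = ((n + k + 1).factorial : ℝ) := by
    have h2' := Nat.factorial_mul_descFactorial (show k ≤ n + k + 1 by omega)
    rw [show n + k + 1 - k = n + 1 by omega] at h2'
    exact_mod_cast congrArg (Nat.cast : ℕ → ℝ) h2'
  have d1 : ((n.descFactorial k : ℕ) : ℝ) = ∏ i ∈ Finset.range k, ((n:ℝ) - i) := by
    rw [Nat.descFactorial_eq_prod_range, Nat.cast_prod]
    apply Finset.prod_congr rfl
    intro i hi
    rw [Finset.mem_range] at hi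
    rw [Nat.cast_sub (by omega)]
  have d2 : (((n+k+1).descFactorial k : ℕ) : ℝ)
      = ∏ i ∈ Finset.range k, ((n:ℝ) + (k:ℝ) + 1 - i) := by
    rw [Nat.descFactorial_eq_prod_range, Nat.cast_prod]
    apply Finset.prod_congr rfl
    intro i hi
    rw [Finset.mem_range] at hi
    rw [Nat.cast_sub (by omega)]
    push_cast
    ring
  rw [Finset.prod_div_distrib, ← d1, ← d2, ← h1, ← h2]
  have e1 : ((n-k).factorial : ℝ) ≠ 0 := by positivity
  have e2 : ((n+1).factorial : ℝ) ≠ 0 := by positivity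
  have e3 : (((n+k+1).descFactorial k : ℕ) : ℝ) ≠ 0 := by
    have h0 : (n+k+1).descFactorial k ≠ 0 := by
      intro hc
      have := Nat.descFactorial_eq_zero_iff_lt.mp hc
      omega
    exact_mod_cast h0
  field_simp

/-- the sign-normalized quotient -/
noncomputable def Qfun (k d n : ℕ) : ℝ :=
  (∑ z ∈ Finset.range (d + 1),
      (-1:ℝ)^(d+z) * ((n-k).choose z : ℝ) * ((k.choose (d-z) : ℝ))^2) / (n.choose d : ℝ)

noncomputable def coeff (k d z : ℕ) : ℝ :=
  (-1:ℝ)^(d+z) * ((k.choose (d-z) : ℝ))^2 * ((d.factorial : ℝ) / (z.factorial : ℝ))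

lemma Qfun_eq (k d n : ℕ) (h : k + d + 1 ≤ n) :
    Qfun k d n = ∑ z ∈ Finset.range (d + 1), coeff k d z * (Phi k z n / Phi 0 d n) := by
  unfold Qfun
  rw [cast_choose d n (by omega), Finset.sum_div]
  apply Finset.sum_congr rfl
  intro z hz
  rw [Finset.mem_range] at hz
  rw [cast_choose_sub k z n (by omega)]
  have e1 : Phi 0 d n ≠ 0 := ne_of_gt (Phi_pos (by omega))
  have ez : (z.factorial : ℝ) ≠ 0 := by positivity
  have ed : (d.factorial : ℝ) ≠ 0 := by positivity
  unfold coeff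
  field_simp

lemma coeff_d (k d : ℕ) : coeff k d d = 1 := by
  unfold coeff
  have : (-1:ℝ)^(d+d) = 1 := by
    have : Even (d + d) := ⟨d, rfl⟩
    exact this.neg_one_pow
  rw [this, Nat.sub_self]
  have ed : (d.factorial : ℝ) ≠ 0 := by positivity
  simp [div_self ed]

lemma tendsto_Qfun_one (k d : ℕ) :
    Tendsto (fun n : ℕ => Qfun k d n) atTop (nhds 1) := by
  have hterm : ∀ z ∈ Finset.range (d + 1),
      Tendsto (fun n : ℕ => coeff k d z * (Phi k z n / Phi 0 d n)) atTop
        (nhds (if z = d then 1 else 0)) := by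
    intro z hz
    rw [Finset.mem_range] at hz
    rcases Nat.lt_or_ge z d with h'|h'
    · rw [if_neg (by omega)]
      have := (tendsto_Phi_ratio_lt k z d h').const_mul (coeff k d z)
      rw [mul_zero] at this
      exact this
    · have hzd : z = d := by omega
      rw [if_pos hzd]
      subst hzd
      exact (tendsto_Phi_ratio k z).congr (fun n => by rw [coeff_d, one_mul])
  have hsum := tendsto_finset_sum (Finset.range (d+1)) hterm
  rw [Finset.sum_ite_eq' (Finset.range (d+1)) d (fun _ => (1:ℝ)),
    if_pos (Finset.self_mem_range_succ d)] at hsum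
  apply hsum.congr'
  filter_upwards [eventually_ge_atTop (k + d + 1)] with n hn
  exact (Qfun_eq k d n hn).symm

lemma sum_coeff_limit (k d : ℕ) :
    ∑ z ∈ Finset.range d, (coeff k d z * if z + 1 = d then (1:ℝ) else 0)
      = -((d:ℝ) * (k:ℝ)^2) := by
  rcases d with _|d'
  · simp
  · have : ∀ z ∈ Finset.range (d'+1),
        (coeff k (d'+1) z * if z + 1 = d'+1 then (1:ℝ) else 0)
        = if z = d' then coeff k (d'+1) z * 1 else 0 := by
      intro z hz
      by_cases h : z = d'
      · subst h; simp
      · rw [if_neg (by omega), if_neg h, mul_zero]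
    rw [Finset.sum_congr rfl this,
      Finset.sum_ite_eq' (Finset.range (d'+1)) d' (fun z => coeff k (d'+1) z * 1),
      if_pos (Finset.self_mem_range_succ d')]
    unfold coeff
    have hodd : (-1:ℝ)^(d'+1+d') = -1 := by
      have : Odd (d'+1+d') := ⟨d', by ring⟩
      exact this.neg_one_pow
    rw [hodd, show d' + 1 - d' = 1 by omega, Nat.choose_one_right, Nat.factorial_succ]
    have ed : (d'.factorial : ℝ) ≠ 0 := by positivity
    push_cast
    field_simp

lemma tendsto_n_mul_one_sub_Qfun (k d : ℕ) :
    Tendsto (fun n : ℕ => (n:ℝ) * (1 - Qfun k d n)) atTop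
      (nhds ((d:ℝ) * (k:ℝ) * ((k:ℝ)+1))) := by
  have hmain := tendsto_n_mul_one_sub_Phi_ratio k d
  have hterm : ∀ z ∈ Finset.range d,
      Tendsto (fun n : ℕ => coeff k d z * ((n:ℝ) * (Phi k z n / Phi 0 d n))) atTop
        (nhds (coeff k d z * if z + 1 = d then (1:ℝ) else 0)) := by
    intro z hz
    rw [Finset.mem_range] at hz
    rcases Nat.lt_or_ge (z+1) d with h'|h'
    · rw [if_neg (by omega)]
      exact (tendsto_n_mul_Phi_ratio_lt k z d h').const_mul _
    · have : z + 1 = d := by omega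
      rw [if_pos this]
      exact (tendsto_n_mul_Phi_ratio_eq k z d this).const_mul _
  have hsum := tendsto_finset_sum (Finset.range d) hterm
  rw [sum_coeff_limit k d] at hsum
  have hcomb := hmain.sub hsum
  have : (d:ℝ) * k - -((d:ℝ) * (k:ℝ)^2) = (d:ℝ) * k * (k+1) := by ring
  rw [this] at hcomb
  apply hcomb.congr'
  filter_upwards [eventually_ge_atTop (k + d + 1)] with n hn
  have hdist : ∑ z ∈ Finset.range d, coeff k d z * ((n:ℝ) * (Phi k z n / Phi 0 d n))
      = (n:ℝ) * ∑ z ∈ Finset.range d, coeff k d z * (Phi k z n / Phi 0 d n) := by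
    rw [Finset.mul_sum]
    apply Finset.sum_congr rfl
    intro z _
    ring
  rw [Qfun_eq k d n hn, Finset.sum_range_succ, coeff_d, one_mul, hdist]
  ring

end LamAux3


/-- The eigenvalue `λ⁽ᵏ⁾(n)` of the Berezin transform `B_{j,j−d}` (with `n = 2j`), given by
Theorem 2 of the paper. -/
noncomputable def lamEigen (k d n : ℕ) : ℝ :=
  ((n.factorial : ℝ) * ((n + 1).factorial : ℝ)) /
      (((n - k).factorial : ℝ) * ((n + k + 1).factorial : ℝ)) *
    ((∑ z ∈ Finset.range (d + 1),
        (-1 : ℝ) ^ z * ((n - k).choose z : ℝ) * ((k.choose (d - z) : ℝ)) ^ 2) /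
      (n.choose d : ℝ)) ^ 2

namespace LamAux4
open Filter Topology Finset LamAux LamAux2 LamAux3

lemma lam_eq (k d n : ℕ) (h : k ≤ n) :
    lamEigen k d n
      = (∏ i ∈ Finset.range k, ((n:ℝ) - i)/((n:ℝ) + (k:ℝ) + 1 - i)) * (Qfun k d n)^2 := by
  unfold lamEigen
  rw [cast_prefactor k n h]
  congr 1
  have hT : (∑ z ∈ Finset.range (d + 1),
        (-1:ℝ)^(d+z) * ((n-k).choose z : ℝ) * ((k.choose (d-z) : ℝ))^2)
      = (-1:ℝ)^d * ∑ z ∈ Finset.range (d + 1),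
        (-1 : ℝ) ^ z * ((n - k).choose z : ℝ) * ((k.choose (d - z) : ℝ)) ^ 2 := by
    rw [Finset.mul_sum]
    apply Finset.sum_congr rfl
    intro z _
    rw [pow_add]
    ring
  unfold Qfun
  rw [hT, mul_div_assoc, mul_pow]
  have : ((-1:ℝ)^d)^2 = 1 := by
    rw [← pow_mul, mul_comm, pow_mul]
    norm_num
  rw [this, one_mul]

lemma tendsto_prefactor (k : ℕ) :
    Tendsto (fun n : ℕ => (n:ℝ) *
        (1 - ∏ i ∈ Finset.range k, ((n:ℝ) - i)/((n:ℝ) + (k:ℝ) + 1 - i))) atTop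
      (nhds ((k:ℝ) * ((k:ℝ) + 1))) := by
  have key := prod_n_mul_one_sub (Finset.range k)
    (fun i n => ((n:ℝ) - i)/((n:ℝ) + (k:ℝ) + 1 - i)) (fun _ => (k:ℝ) + 1)
    (fun i hi => by
      rw [Finset.mem_range] at hi
      have h1 : Tendsto (fun n : ℕ => (n:ℝ) * (((k:ℝ)+1)/((n:ℝ) - ((i:ℝ) - k - 1))))
          atTop (nhds ((k:ℝ)+1)) := tendsto_n_mul_div _ _
      apply h1.congr
      intro n
      have hik : (i:ℝ) < k := by exact_mod_cast hi
      have hden : (n:ℝ) + (k:ℝ) + 1 - i ≠ 0 := by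
        have : (0:ℝ) ≤ n := Nat.cast_nonneg n
        nlinarith
      have hde : (n:ℝ) - ((i:ℝ) - k - 1) = (n:ℝ) + (k:ℝ) + 1 - i := by ring
      rw [hde]
      congr 1
      show ((k:ℝ)+1)/((n:ℝ) + (k:ℝ) + 1 - i) = 1 - ((n:ℝ)-i)/((n:ℝ) + (k:ℝ) + 1 - i)
      rw [eq_sub_iff_add_eq, ← add_div, div_eq_one_iff_eq hden]
      ring)
  rw [Finset.sum_const, Finset.card_range, nsmul_eq_mul] at key
  exact key

end LamAux4

theorem lamEigen_asymptotics (d k : ℕ) (hk : 1 ≤ k) :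
    Filter.Tendsto (fun n : ℕ => (n : ℝ) * (1 - lamEigen k d n)) Filter.atTop
      (nhds ((k : ℝ) * ((k : ℝ) + 1) * (2 * (d : ℝ) + 1))) := by
  have hA := LamAux4.tendsto_prefactor k
  have hQ1 := LamAux3.tendsto_Qfun_one k d
  have hQ2 := LamAux3.tendsto_n_mul_one_sub_Qfun k d
  have hcomb : Filter.Tendsto (fun n : ℕ =>
      (LamAux3.Qfun k d n)^2 *
        ((n:ℝ) * (1 - ∏ i ∈ Finset.range k, ((n:ℝ) - i)/((n:ℝ) + (k:ℝ) + 1 - i)))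
      + (1 + LamAux3.Qfun k d n) * ((n:ℝ) * (1 - LamAux3.Qfun k d n)))
      Filter.atTop
      (nhds ((1:ℝ)^2 * ((k:ℝ)*((k:ℝ)+1)) + (1+1) * ((d:ℝ)*(k:ℝ)*((k:ℝ)+1)))) :=
    ((hQ1.pow 2).mul hA).add ((tendsto_const_nhds.add hQ1).mul hQ2)
  have hval : (1:ℝ)^2 * ((k:ℝ)*((k:ℝ)+1)) + (1+1) * ((d:ℝ)*(k:ℝ)*((k:ℝ)+1))
      = (k:ℝ) * ((k:ℝ)+1) * (2*(d:ℝ)+1) := by ring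
  rw [hval] at hcomb
  apply hcomb.congr'
  filter_upwards [Filter.eventually_ge_atTop k] with n hn
  rw [LamAux4.lam_eq k d n hn]
  ring
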